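/- For every real β with |β| < 4, ∑_{n=1}^∞ 1/( n · √(4n² − β) · (2n + √(4n² − β)) ) = ∑_{j=1}^∞ (2j−1)!! · ζ(2j+1) · β^{j−1} / ( 8^j · j! ), where ζ(2j+1) = ∑_{m=1}^∞ m^{−(2j+1)} is the Riemann zeta value, (2j−1)!! = 1·3·5·⋯·(2j−1), and both series converge absolutely. Equivalently, θ(β) = −∑_{j=1}^∞ (2j−1)!! ζ(2j+1) β^{j−1} / (8^j j!). -/

import Mathlib

open Real

section Stmt13Aux


lemma central_sum : ∀ n : ℕ,
    ∑ i ∈ Finset.range (n+1), Nat.centralBinom i * Nat.centralBinom (n - i) = 4 ^ n := by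
  have key1 : ∀ m : ℕ,
      2 * ∑ i ∈ Finset.range (m+1), i * (Nat.centralBinom i * Nat.centralBinom (m - i))
        = m * ∑ i ∈ Finset.range (m+1), Nat.centralBinom i * Nat.centralBinom (m - i) := by
    intro m
    have hrefl := Finset.sum_range_reflect
      (fun i => i * (Nat.centralBinom i * Nat.centralBinom (m - i))) (m+1)
    simp only [Nat.add_sub_cancel] at hrefl
    rw [two_mul, Finset.mul_sum]
    nth_rewrite 1 [← hrefl]
    rw [← Finset.sum_add_distrib]
    refine Finset.sum_congr rfl fun i hi => ?_
    have him : i ≤ m := Nat.lt_succ_iff.mp (Finset.mem_range.mp hi)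
    have h1 : m - (m - i) = i := Nat.sub_sub_self him
    have h2 : (m - i) + i = m := Nat.sub_add_cancel him
    rw [h1, mul_comm (Nat.centralBinom (m-i))]
    calc (m - i) * (Nat.centralBinom i * Nat.centralBinom (m - i))
          + i * (Nat.centralBinom i * Nat.centralBinom (m - i))
        = ((m-i) + i) * (Nat.centralBinom i * Nat.centralBinom (m - i)) := by ring
      _ = m * (Nat.centralBinom i * Nat.centralBinom (m - i)) := by rw [h2]
  intro n
  induction n with
  | zero => simp [Nat.centralBinom]
  | succ n ih =>
    have key2 : ∑ i ∈ Finset.range (n+2), i * (Nat.centralBinom i * Nat.centralBinom (n+1 - i))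
        = ∑ j ∈ Finset.range (n+1), (4*j+2) * (Nat.centralBinom j * Nat.centralBinom (n - j)) := by
      rw [Finset.sum_range_succ' (fun i => i * (Nat.centralBinom i * Nat.centralBinom (n+1 - i))) (n+1)]
      simp only [Nat.zero_eq, zero_mul, add_zero]
      refine Finset.sum_congr rfl fun i _ => ?_
      have h3 : n + 1 - (i+1) = n - i := by omega
      rw [h3, ← mul_assoc, Nat.succ_mul_centralBinom_succ]
      ring
    have h4 : (n+1) * ∑ i ∈ Finset.range (n+2), Nat.centralBinom i * Nat.centralBinom (n+1 - i)
        = (n+1) * (4 * ∑ i ∈ Finset.range (n+1), Nat.centralBinom i * Nat.centralBinom (n - i)) := by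
      rw [← key1 (n+1), key2]
      have expand : ∑ j ∈ Finset.range (n+1), (4*j+2) * (Nat.centralBinom j * Nat.centralBinom (n - j))
          = 4 * ∑ j ∈ Finset.range (n+1), j * (Nat.centralBinom j * Nat.centralBinom (n - j))
            + 2 * ∑ j ∈ Finset.range (n+1), Nat.centralBinom j * Nat.centralBinom (n - j) := by
        rw [Finset.mul_sum, Finset.mul_sum, ← Finset.sum_add_distrib]
        exact Finset.sum_congr rfl fun j _ => by ring
      rw [expand, mul_add, ← mul_assoc 2 4, mul_comm 2 4, mul_assoc 4 2, key1 n]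
      ring
    have := Nat.eq_of_mul_eq_mul_left (Nat.succ_pos n) h4
    rw [this, ih, pow_succ]
    ring


lemma centralBinom_le_four_pow (n : ℕ) : Nat.centralBinom n ≤ 4 ^ n := by
  have h := Nat.sum_range_choose (2*n)
  have hmem : n ∈ Finset.range (2*n+1) := Finset.mem_range.mpr (by omega)
  have hle : Nat.centralBinom n ≤ ∑ i ∈ Finset.range (2*n+1), (2*n).choose i :=
    Finset.single_le_sum (f := fun i => (2*n).choose i) (fun i _ => Nat.zero_le _) hmem
  calc Nat.centralBinom n ≤ 2 ^ (2*n) := by rw [← h]; exact hle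
    _ = 4 ^ n := by rw [pow_mul]; norm_num

lemma centralBinom_succ_le (n : ℕ) : Nat.centralBinom (n+1) ≤ 4 * Nat.centralBinom n := by
  have h := Nat.succ_mul_centralBinom_succ n
  have : (n+1) * Nat.centralBinom (n+1) ≤ (n+1) * (4 * Nat.centralBinom n) := by
    rw [h]; nlinarith [Nat.centralBinom_pos n]
  exact Nat.le_of_mul_le_mul_left this (Nat.succ_pos n)

lemma hasSum_central {x : ℝ} (hx : |x| < 1) :
    HasSum (fun j : ℕ => (Nat.centralBinom j : ℝ) * (x/4)^j) (1 / Real.sqrt (1 - x)) := by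
  set f : ℕ → ℝ := fun j => (Nat.centralBinom j : ℝ) * (x/4)^j with hfdef
  have hcast : ∀ j : ℕ, (Nat.centralBinom j : ℝ) ≤ 4 ^ j := by
    intro j; exact_mod_cast Nat.cast_le.mpr (centralBinom_le_four_pow j)
  have hb : ∀ j, |f j| ≤ |x|^j := by
    intro j
    have h1 : |f j| = (Nat.centralBinom j : ℝ) * (|x|/4)^j := by
      rw [hfdef]
      rw [abs_mul, abs_pow, abs_div, abs_of_nonneg (by positivity : (0:ℝ) ≤ (Nat.centralBinom j : ℝ))]
      norm_num
    rw [h1]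
    calc (Nat.centralBinom j : ℝ) * (|x|/4)^j ≤ 4^j * (|x|/4)^j := by
          apply mul_le_mul_of_nonneg_right (hcast j) (by positivity)
      _ = |x|^j := by rw [← mul_pow, show (4:ℝ)*(|x|/4) = |x| from by ring]
  have hsx : Summable (fun j : ℕ => |x|^j) :=
    summable_geometric_of_lt_one (abs_nonneg x) hx
  have habs : Summable (fun j => |f j|) :=
    Summable.of_nonneg_of_le (fun j => abs_nonneg _) hb hsx
  have hfs : Summable f := habs.of_abs
  have hnorm : Summable (fun j => ‖f j‖) := by simpa [Real.norm_eq_abs] using habs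
  -- Cauchy product
  have hsq : (∑' j, f j) * (∑' j, f j) = ∑' n, ∑ k ∈ Finset.range (n+1), f k * f (n - k) :=
    tsum_mul_tsum_eq_tsum_sum_range_of_summable_norm hnorm hnorm
  have hinner : ∀ n : ℕ, ∑ k ∈ Finset.range (n+1), f k * f (n-k) = x^n := by
    intro n
    have hterm : ∀ k ∈ Finset.range (n+1), f k * f (n-k)
        = ((Nat.centralBinom k * Nat.centralBinom (n-k) : ℕ) : ℝ) * (x/4)^n := by
      intro k hk
      have hkn : k ≤ n := Nat.lt_succ_iff.mp (Finset.mem_range.mp hk)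
      have hpow : (x/4)^k * (x/4)^(n-k) = (x/4)^n := by
        rw [← pow_add, Nat.add_sub_cancel' hkn]
      rw [hfdef]
      push_cast
      rw [show (Nat.centralBinom k : ℝ) * (x/4)^k * ((Nat.centralBinom (n-k) : ℝ) * (x/4)^(n-k))
        = (Nat.centralBinom k : ℝ) * (Nat.centralBinom (n-k) : ℝ) * ((x/4)^k * (x/4)^(n-k)) by ring,
        hpow]
    rw [Finset.sum_congr rfl hterm, ← Finset.sum_mul, ← Nat.cast_sum, central_sum n]
    push_cast
    rw [← mul_pow, show (4:ℝ)*(x/4) = x from by ring]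
  have hgeom : ∑' n : ℕ, x^n = (1-x)⁻¹ :=
    tsum_geometric_of_norm_lt_one (by rwa [Real.norm_eq_abs])
  have hg2 : (∑' j, f j) * (∑' j, f j) = (1-x)⁻¹ := by
    rw [hsq, tsum_congr hinner, hgeom]
  -- positivity
  have he : Summable (fun k => f (2*k)) :=
    hfs.comp_injective (fun a b h => by omega)
  have ho : Summable (fun k => f (2*k+1)) :=
    hfs.comp_injective (fun a b h => by omega)
  have heo : HasSum f (∑' k, f (2*k) + ∑' k, f (2*k+1)) :=
    HasSum.even_add_odd he.hasSum ho.hasSum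
  have hgeq : ∑' j, f j = ∑' k, (f (2*k) + f (2*k+1)) := by
    rw [hfs.hasSum.unique heo, Summable.tsum_add he ho]
  have hm1 : -1 < x := neg_lt_of_abs_lt hx
  have hterm0 : ∀ k, 0 ≤ f (2*k) + f (2*k+1) := by
    intro k
    have h4 : (Nat.centralBinom (2*k+1) : ℝ) ≤ 4 * Nat.centralBinom (2*k) := by
      exact_mod_cast Nat.cast_le.mpr (centralBinom_succ_le (2*k))
    have hC1 : (0:ℝ) ≤ (Nat.centralBinom (2*k+1) : ℝ) := by positivity
    have heq : f (2*k) + f (2*k+1)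
        = (x/4)^(2*k) * ((Nat.centralBinom (2*k) : ℝ) + (Nat.centralBinom (2*k+1) : ℝ) * (x/4)) := by
      simp only [hfdef]; ring
    rw [heq]
    apply mul_nonneg
    · rw [pow_mul]; positivity
    · nlinarith
  have hpos : 0 < ∑' j, f j := by
    have hu : Summable (fun k => f (2*k) + f (2*k+1)) := he.add ho
    have h00 : f (2*0) + f (2*0+1) ≤ ∑' k, (f (2*k) + f (2*k+1)) :=
      Summable.le_tsum hu 0 (fun k _ => hterm0 k)
    have hf0 : f (2*0) + f (2*0+1) = 1 + x/2 := by
      rw [hfdef]; norm_num [Nat.centralBinom]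
      ring
    rw [hgeq]
    rw [hf0] at h00
    linarith
  have h1x : 0 < 1 - x := by
    have := lt_of_abs_lt hx; linarith
  have hval : ∑' j, f j = 1 / Real.sqrt (1 - x) := by
    have h1 : ∑' j, f j = Real.sqrt ((∑' j, f j) * (∑' j, f j)) :=
      (Real.sqrt_mul_self hpos.le).symm
    rw [h1, hg2, Real.sqrt_inv, one_div]
  exact hval ▸ hfs.hasSum

lemma df_id (k : ℕ) : (2*(k+1) - 1).doubleFactorial * 2^(k+1) = (k+1).centralBinom * (k+1).factorial := by
  rw [show 2*(k+1) - 1 = 2*k+1 from by omega]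
  have h1 : (2*(k+1)).factorial = (2*(k+1)).doubleFactorial * (2*k+1).doubleFactorial := by
    have := Nat.factorial_eq_mul_doubleFactorial (2*k+1)
    have h2 : 2*k+1+1 = 2*(k+1) := by ring
    rw [h2] at this
    rw [this]
  have h3 : (2*(k+1)).doubleFactorial = 2^(k+1) * (k+1).factorial :=
    Nat.doubleFactorial_two_mul (k+1)
  have h4 : (k+1).centralBinom * ((k+1).factorial * (k+1).factorial) = (2*(k+1)).factorial := by
    have := Nat.choose_mul_factorial_mul_factorial (show k+1 ≤ 2*(k+1) by omega)
    rw [show 2*(k+1) - (k+1) = k+1 by omega] at this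
    rw [Nat.centralBinom, ← mul_assoc]
    exact this
  have h5 : ((2*k+1).doubleFactorial * 2^(k+1)) * (k+1).factorial
      = ((k+1).centralBinom * (k+1).factorial) * (k+1).factorial := by
    rw [mul_assoc, ← h3, mul_comm ((2*k+1).doubleFactorial), ← h1, mul_assoc, h4]
  exact Nat.eq_of_mul_eq_mul_right (Nat.factorial_pos (k+1)) h5

-- reindexing helper
lemma hasSum_pnat_of_nat {g : ℕ+ → ℝ} {a : ℝ}
    (h : HasSum (fun j : ℕ => g j.succPNat) a) : HasSum g a := by
  refine (Equiv.pnatEquivNat.symm.hasSum_iff).mp ?_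
  exact h

lemma hasSum_pn (β : ℝ) (hβ : |β| < 4) (n : ℕ+) :
    HasSum (fun j : ℕ+ => (Nat.centralBinom (j:ℕ) : ℝ) * β^((j:ℕ)-1) /
        (16^(j:ℕ) * ((n:ℕ):ℝ)^(2*(j:ℕ)+1)))
      (1/(((n:ℕ):ℝ) * Real.sqrt (4*((n:ℕ):ℝ)^2 - β) *
        (2*((n:ℕ):ℝ) + Real.sqrt (4*((n:ℕ):ℝ)^2 - β)))) := by
  set N : ℝ := ((n:ℕ):ℝ) with hN
  have hN1 : (1:ℝ) ≤ N := by
    have h : 1 ≤ (n:ℕ) := n.one_le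
    rw [hN]; exact_mod_cast h
  have hNpos : 0 < N := lt_of_lt_of_le one_pos hN1
  have ha : 0 < 4*N^2 - β := by
    have h1 : β < 4 := lt_of_abs_lt hβ
    nlinarith
  set s : ℝ := Real.sqrt (4*N^2 - β) with hs
  have hspos : 0 < s := Real.sqrt_pos.mpr ha
  have hs2 : s^2 = 4*N^2 - β := Real.sq_sqrt ha.le
  by_cases hb0 : β = 0
  · subst hb0
    have hs4 : s = 2*N := by
      rw [hs, sub_zero, show 4*N^2 = (2*N)^2 by ring, Real.sqrt_sq (by positivity)]
    have hfun : ∀ j : ℕ+, j ≠ 1 →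
        (Nat.centralBinom (j:ℕ) : ℝ) * (0:ℝ)^((j:ℕ)-1) / (16^(j:ℕ) * N^(2*(j:ℕ)+1)) = 0 := by
      intro j hj
      have hj1 : (j:ℕ) ≠ 1 := by
        intro h; exact hj (PNat.coe_injective (by simpa using h))
      have hj2 : 1 ≤ (j:ℕ) := j.one_le
      rw [zero_pow (by omega : (j:ℕ) - 1 ≠ 0)]
      simp
    have hss := hasSum_single (f := fun j : ℕ+ => (Nat.centralBinom (j:ℕ) : ℝ) * (0:ℝ)^((j:ℕ)-1) /
        (16^(j:ℕ) * N^(2*(j:ℕ)+1))) 1 hfun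
    have hval : (Nat.centralBinom ((1:ℕ+):ℕ) : ℝ) * (0:ℝ)^(((1:ℕ+):ℕ)-1) /
        (16^((1:ℕ+):ℕ) * N^(2*((1:ℕ+):ℕ)+1))
        = 1/(N * s * (2*N + s)) := by
      rw [hs4]
      norm_num [Nat.centralBinom]
      field_simp
      ring
    convert hss using 1
    exact hval.symm
  · set x : ℝ := β/(4*N^2) with hx
    have hx1 : |x| < 1 := by
      rw [hx, abs_div, abs_of_pos (by positivity : (0:ℝ) < 4*N^2)]
      rw [div_lt_one (by positivity)]
      nlinarith [abs_nonneg β]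
    have h0 := hasSum_central hx1
    have h1 : HasSum (fun j : ℕ => (Nat.centralBinom (j+1) : ℝ) * (x/4)^(j+1))
        (1 / Real.sqrt (1-x) - 1) :=
      (hasSum_nat_add_iff (f := fun j : ℕ => ((Nat.centralBinom j : ℝ)) * (x/4)^j) 1).mpr
        (by simpa [Finset.sum_range_one, Nat.centralBinom] using h0)
    have h2 : HasSum (fun j : ℕ+ => (Nat.centralBinom (j:ℕ) : ℝ) * (x/4)^((j:ℕ)))
        (1 / Real.sqrt (1-x) - 1) := by
      apply hasSum_pnat_of_nat
      have : ∀ j : ℕ, ((j.succPNat : ℕ+) : ℕ) = j + 1 := fun j => Nat.succPNat_coe j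
      simpa [this] using h1
    have h3 := h2.mul_left (1/(β*N))
    have hsqrt : Real.sqrt (1-x) = s/(2*N) := by
      have h4 : (4*N^2:ℝ) ≠ 0 := by positivity
      have e1 : (1:ℝ) - x = (4*N^2 - β)/((2*N)^2) := by
        rw [hx, show ((2*N)^2:ℝ) = 4*N^2 by ring, sub_div, div_self h4]
      rw [e1, Real.sqrt_div ha.le, Real.sqrt_sq (by positivity : (0:ℝ) ≤ 2*N)]
    have hfun : ∀ j : ℕ+, 1/(β*N) * ((Nat.centralBinom (j:ℕ) : ℝ) * (x/4)^((j:ℕ)))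
        = (Nat.centralBinom (j:ℕ) : ℝ) * β^((j:ℕ)-1) / (16^(j:ℕ) * N^(2*(j:ℕ)+1)) := by
      intro j
      obtain ⟨k, hk⟩ : ∃ k, (j:ℕ) = k+1 := ⟨(j:ℕ)-1, by have := j.pos; omega⟩
      rw [hk, hx, show β/(4*N^2)/4 = β/(16*N^2) from by ring, div_pow]
      rw [Nat.add_sub_cancel]
      field_simp
      ring
    have hval : 1/(β*N) * (1/Real.sqrt (1-x) - 1) = 1/(N*s*(2*N+s)) := by
      rw [hsqrt]
      have hkey : (2*N - s)*(2*N+s) = β := by linear_combination -hs2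
      have h2Ns : (2*N + s) ≠ 0 := by positivity
      have hsne : s ≠ 0 := ne_of_gt hspos
      have hNne : N ≠ 0 := ne_of_gt hNpos
      field_simp
      linear_combination hkey
    simp only [hfun] at h3
    rw [hval] at h3
    exact h3

end Stmt13Aux

/-- The function `θ(β) = -∑_{n≥1} 1/( n √(4n²-β) (2n+√(4n²-β)) )`. -/
noncomputable def theta (β : ℝ) : ℝ :=
  -∑' n : ℕ+, 1/(((n:ℕ):ℝ) * Real.sqrt (4*((n:ℕ):ℝ)^2 - β) *
      (2*((n:ℕ):ℝ) + Real.sqrt (4*((n:ℕ):ℝ)^2 - β)))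

lemma summable_pnat_pow {p : ℕ} (hp : 2 ≤ p) : Summable (fun n : ℕ+ => 1/((n:ℕ):ℝ)^p) := by
  have h : Summable (fun n : ℕ => 1/(n:ℝ)^p) := Real.summable_one_div_nat_pow.mpr (by omega)
  have hinj : Function.Injective ((↑) : ℕ+ → ℕ) := PNat.coe_injective
  refine (Function.Injective.summable_iff hinj ?_).mpr h
  intro x hx
  have hx0 : x = 0 := by
    by_contra h0
    exact hx ⟨⟨x, Nat.pos_of_ne_zero h0⟩, rfl⟩
  subst hx0
  simp [zero_pow (by omega : p ≠ 0)]

lemma summable_pnat_geom {r : ℝ} (hr0 : 0 ≤ r) (hr : r < 1) :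
    Summable (fun j : ℕ+ => r^((j:ℕ)-1)/4) := by
  have h : Summable (fun k : ℕ => r^k/4) :=
    (summable_geometric_of_lt_one hr0 hr).div_const 4
  refine (Equiv.pnatEquivNat.symm.summable_iff).mp ?_
  exact h.congr (fun k => by simp [Equiv.pnatEquivNat, Nat.succPNat])

/-- for `|β| < 4`,
`∑_{n≥1} 1/( n √(4n²-β) (2n+√(4n²-β)) ) = ∑_{j≥1} (2j-1)!! ζ(2j+1) β^{j-1} / (8^j j!)`,
where `ζ(2j+1) = ∑_{m≥1} m^{-(2j+1)}`; both series converge absolutely. Equivalently,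
`θ(β) = -∑_{j≥1} (2j-1)!! ζ(2j+1) β^{j-1} / (8^j j!)`. -/
theorem stmt13 (β : ℝ) (hβ : |β| < 4) :
    Summable (fun n : ℕ+ => 1/(((n:ℕ):ℝ) * Real.sqrt (4*((n:ℕ):ℝ)^2 - β) *
      (2*((n:ℕ):ℝ) + Real.sqrt (4*((n:ℕ):ℝ)^2 - β)))) ∧
    Summable (fun j : ℕ+ =>
      |((Nat.doubleFactorial (2*(j:ℕ) - 1) : ℝ) *
          (∑' m : ℕ+, 1/((m:ℕ):ℝ)^(2*(j:ℕ)+1)) * β^((j:ℕ) - 1)) /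
        ((8:ℝ)^(j:ℕ) * (Nat.factorial (j:ℕ) : ℝ))|) ∧
    (∑' n : ℕ+, 1/(((n:ℕ):ℝ) * Real.sqrt (4*((n:ℕ):ℝ)^2 - β) *
        (2*((n:ℕ):ℝ) + Real.sqrt (4*((n:ℕ):ℝ)^2 - β))))
      = ∑' j : ℕ+, ((Nat.doubleFactorial (2*(j:ℕ) - 1) : ℝ) *
          (∑' m : ℕ+, 1/((m:ℕ):ℝ)^(2*(j:ℕ)+1)) * β^((j:ℕ) - 1)) /
          ((8:ℝ)^(j:ℕ) * (Nat.factorial (j:ℕ) : ℝ)) ∧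
    theta β
      = -∑' j : ℕ+, ((Nat.doubleFactorial (2*(j:ℕ) - 1) : ℝ) *
          (∑' m : ℕ+, 1/((m:ℕ):ℝ)^(2*(j:ℕ)+1)) * β^((j:ℕ) - 1)) /
          ((8:ℝ)^(j:ℕ) * (Nat.factorial (j:ℕ) : ℝ)) := by
  set F : ℕ+ × ℕ+ → ℝ := fun p => (Nat.centralBinom (p.2:ℕ) : ℝ) * β^((p.2:ℕ)-1) /
      (16^(p.2:ℕ) * ((p.1:ℕ):ℝ)^(2*(p.2:ℕ)+1)) with hF
  -- the bound
  have hbound : ∀ p : ℕ+ × ℕ+, |F p| ≤ (1/((p.1:ℕ):ℝ)^3) * ((|β|/4)^((p.2:ℕ)-1)/4) := by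
    rintro ⟨n, j⟩
    have hN1 : (1:ℝ) ≤ ((n:ℕ):ℝ) := by exact_mod_cast n.one_le
    have hNpos : (0:ℝ) < ((n:ℕ):ℝ) := lt_of_lt_of_le one_pos hN1
    obtain ⟨k, hk⟩ : ∃ k, (j:ℕ) = k+1 := ⟨(j:ℕ)-1, by have := j.pos; omega⟩
    have hC : (Nat.centralBinom (j:ℕ) : ℝ) ≤ 4^(j:ℕ) := by
      exact_mod_cast centralBinom_le_four_pow (j:ℕ)
    simp only [hF]
    rw [abs_div, abs_mul, abs_pow, abs_of_nonneg (by positivity : (0:ℝ) ≤ (Nat.centralBinom (j:ℕ) : ℝ)),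
      abs_of_pos (by positivity : (0:ℝ) < 16^(j:ℕ) * ((n:ℕ):ℝ)^(2*(j:ℕ)+1))]
    calc (Nat.centralBinom (j:ℕ) : ℝ) * |β|^((j:ℕ)-1) / (16^(j:ℕ) * ((n:ℕ):ℝ)^(2*(j:ℕ)+1))
        ≤ 4^(j:ℕ) * |β|^((j:ℕ)-1) / (16^(j:ℕ) * ((n:ℕ):ℝ)^3) := by
          gcongr
          · omega
      _ = (1/((n:ℕ):ℝ)^3) * ((|β|/4)^((j:ℕ)-1)/4) := by
          rw [hk, Nat.add_sub_cancel, div_pow,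
            show (16:ℝ)^(k+1) = 4^(k+1) * 4^(k+1) from by rw [← mul_pow]; norm_num,
            show (4:ℝ)^(k+1) = 4^k * 4 from by rw [pow_succ]]
          field_simp
  have hg : Summable (fun n : ℕ+ => 1/((n:ℕ):ℝ)^3) := summable_pnat_pow (by norm_num)
  have hh : Summable (fun j : ℕ+ => (|β|/4)^((j:ℕ)-1)/4) :=
    summable_pnat_geom (by positivity) (by linarith [abs_nonneg β])
  have hprod : Summable (fun p : ℕ+ × ℕ+ => (1/((p.1:ℕ):ℝ)^3) * ((|β|/4)^((p.2:ℕ)-1)/4)) := by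
    apply summable_mul_of_summable_norm (f := fun n : ℕ+ => 1/((n:ℕ):ℝ)^3)
      (g := fun j : ℕ+ => (|β|/4)^((j:ℕ)-1)/4)
    · exact hg.abs.congr (fun n => rfl)
    · exact hh.abs.congr (fun j => rfl)
  have hFabs : Summable (fun p => |F p|) :=
    Summable.of_nonneg_of_le (fun p => abs_nonneg _) hbound hprod
  have hFs : Summable F := hFabs.of_abs
  have hpn : ∀ n : ℕ+, HasSum (fun j : ℕ+ => F (n, j))
      (1/(((n:ℕ):ℝ) * Real.sqrt (4*((n:ℕ):ℝ)^2 - β) *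
        (2*((n:ℕ):ℝ) + Real.sqrt (4*((n:ℕ):ℝ)^2 - β)))) := fun n => hasSum_pn β hβ n
  -- conjunct 1
  have hsum1 : Summable (fun n : ℕ+ => 1/(((n:ℕ):ℝ) * Real.sqrt (4*((n:ℕ):ℝ)^2 - β) *
      (2*((n:ℕ):ℝ) + Real.sqrt (4*((n:ℕ):ℝ)^2 - β)))) :=
    hFs.prod.congr (fun n => (hpn n).tsum_eq)
  -- coefficient evaluation
  have hcoeff : ∀ j : ℕ+, ∑' n : ℕ+, F (n, j)
      = ((Nat.doubleFactorial (2*(j:ℕ) - 1) : ℝ) *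
          (∑' m : ℕ+, 1/((m:ℕ):ℝ)^(2*(j:ℕ)+1)) * β^((j:ℕ) - 1)) /
          ((8:ℝ)^(j:ℕ) * (Nat.factorial (j:ℕ) : ℝ)) := by
    intro j
    have h1 : ∀ n : ℕ+, F (n, j)
        = ((Nat.centralBinom (j:ℕ) : ℝ) * β^((j:ℕ)-1)/16^(j:ℕ)) * (1/((n:ℕ):ℝ)^(2*(j:ℕ)+1)) := by
      intro n
      simp only [hF]
      rw [div_mul_eq_div_mul_one_div]
    rw [tsum_congr h1, tsum_mul_left]
    obtain ⟨k, hk⟩ : ∃ k, (j:ℕ) = k+1 := ⟨(j:ℕ)-1, by have := j.pos; omega⟩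
    rw [hk]
    have hdfr : ((2*(k+1) - 1).doubleFactorial : ℝ) * 2^(k+1)
        = (Nat.centralBinom (k+1) : ℝ) * ((k+1).factorial : ℝ) := by
      exact_mod_cast df_id k
    have hfac : ((k+1).factorial : ℝ) ≠ 0 := by positivity
    rw [show (16:ℝ)^(k+1) = 8^(k+1) * 2^(k+1) from by rw [← mul_pow]; norm_num]
    rw [Nat.add_sub_cancel]
    field_simp
    linear_combination (-(β^k * (∑' m : ℕ+, 1/((m:ℕ):ℝ)^(2*(k+1)+1)))) * hdfr
  -- conjunct 2
  have habs_j : Summable (fun j : ℕ+ => ∑' n : ℕ+, |F (n, j)|) := hFabs.prod_symm.prod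
  have hsum2 : Summable (fun j : ℕ+ =>
      |((Nat.doubleFactorial (2*(j:ℕ) - 1) : ℝ) *
          (∑' m : ℕ+, 1/((m:ℕ):ℝ)^(2*(j:ℕ)+1)) * β^((j:ℕ) - 1)) /
        ((8:ℝ)^(j:ℕ) * (Nat.factorial (j:ℕ) : ℝ))|) := by
    refine Summable.of_nonneg_of_le (fun j => abs_nonneg _) (fun j => ?_) habs_j
    rw [← hcoeff j]
    have hns : Summable (fun n : ℕ+ => ‖F (n, j)‖) :=
      (hFabs.prod_symm.prod_factor j).congr (fun n => rfl)
    simpa [Real.norm_eq_abs] using norm_tsum_le_tsum_norm hns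
  -- conjunct 3
  have hswap : ∑' n : ℕ+, ∑' j : ℕ+, F (n, j) = ∑' j : ℕ+, ∑' n : ℕ+, F (n, j) :=
    (Summable.tsum_comm (f := fun n j => F (n, j)) hFs).symm
  have hsum3 : (∑' n : ℕ+, 1/(((n:ℕ):ℝ) * Real.sqrt (4*((n:ℕ):ℝ)^2 - β) *
        (2*((n:ℕ):ℝ) + Real.sqrt (4*((n:ℕ):ℝ)^2 - β))))
      = ∑' j : ℕ+, ((Nat.doubleFactorial (2*(j:ℕ) - 1) : ℝ) *
          (∑' m : ℕ+, 1/((m:ℕ):ℝ)^(2*(j:ℕ)+1)) * β^((j:ℕ) - 1)) /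
          ((8:ℝ)^(j:ℕ) * (Nat.factorial (j:ℕ) : ℝ)) := by
    rw [tsum_congr (fun n => (hpn n).tsum_eq.symm), hswap, tsum_congr hcoeff]
  exact ⟨hsum1, hsum2, hsum3, by simp only [theta]; rw [hsum3]⟩
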